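/- Let W : ℝ → ℝ be C³ with W, W', W'' bounded, let ψ : ℝ²₊ → ℝ be C², let K ⊂ ℝ² be compact, and let T > 0. Let u : [0,T] × ℝ²₊ → ℝ be C² up to the boundary, satisfying ∂ₜu = Δu for y > 0 and ∂ₜu = ∂_y u − W'(u) on y = 0, and suppose that for every t ∈ [0,T] the function u(t,·,·) − ψ is supported in K. Define the relative energy E(t) := (1/2)∫_{ℝ²₊} (|∇u(t,x,y)|² − |∇ψ(x,y)|²) dx dy + ∫_ℝ (W(u(t,x,0)) − W(ψ(x,0))) dx. Then E is differentiable on (0,T) with E'(t) = −∫_{ℝ²₊} (∂ₜu(t,x,y))² dx dy − ∫_ℝ (∂ₜu(t,x,0))² dx ≤ 0; equivalently, E'(t) = −∫_{ℝ²₊} (Δu)² dx dy − ∫_ℝ (∂_y u(t,x,0) − W'(u(t,x,0)))² dx. -/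

import Mathlib

open Real Set MeasureTheory

noncomputable section

/-- Partial derivative in the first (x) variable of `f : ℝ → ℝ → ℝ`. -/
def pdx (f : ℝ → ℝ → ℝ) (x y : ℝ) : ℝ := deriv (fun x' => f x' y) x

/-- Partial derivative in the second (y) variable. -/
def pdy (f : ℝ → ℝ → ℝ) (x y : ℝ) : ℝ := deriv (fun y' => f x y') y

/-- Second partial derivative in x. -/
def pdxx (f : ℝ → ℝ → ℝ) (x y : ℝ) : ℝ := deriv (fun x' => pdx f x' y) x

/-- Second partial derivative in y. -/
def pdyy (f : ℝ → ℝ → ℝ) (x y : ℝ) : ℝ := deriv (fun y' => pdy f x y') y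

/-- The closed upper half-plane, as a subset of `ℝ²`. -/
def upperHalfPlane2 : Set (ℝ × ℝ) := {p : ℝ × ℝ | 0 ≤ p.2}

namespace EDL

lemma null_horiz : volume {p : ℝ × ℝ | p.2 = 0} = 0 := by
  have h : {p : ℝ × ℝ | p.2 = 0} = (univ : Set ℝ) ×ˢ ({0} : Set ℝ) := by
    ext ⟨a, b⟩; simp [eq_comm]
  rw [h, Measure.volume_eq_prod, Measure.prod_prod]
  simp

lemma integrableOn_upper {f : ℝ × ℝ → ℝ} (hf : Continuous f) (R : ℝ)
    (h0 : ∀ p : ℝ × ℝ, 0 < p.2 → R ≤ ‖p‖ → f p = 0) :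
    IntegrableOn f {p : ℝ × ℝ | 0 ≤ p.2} := by
  have h1 : IntegrableOn f (Metric.closedBall (0 : ℝ × ℝ) R) :=
    hf.continuousOn.integrableOn_compact (isCompact_closedBall _ _)
  have h2 : IntegrableOn f ({p : ℝ × ℝ | 0 ≤ p.2} \ Metric.closedBall (0 : ℝ × ℝ) R) := by
    apply Integrable.congr (integrableOn_zero (μ := volume) (s := {p : ℝ × ℝ | 0 ≤ p.2} \ Metric.closedBall (0 : ℝ × ℝ) R))
    have : ∀ᵐ p : ℝ × ℝ ∂volume, p.2 ≠ 0 := by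
      rw [ae_iff]; simpa using null_horiz
    filter_upwards [ae_restrict_of_ae this,
      ae_restrict_mem ((measurableSet_le measurable_const measurable_snd).diff
        measurableSet_closedBall)] with p hp hmem
    rcases hmem with ⟨hp2, hball⟩
    have : 0 < p.2 := lt_of_le_of_ne hp2 (Ne.symm hp)
    have : f p = 0 := h0 p this (by
      have := Metric.mem_closedBall.not.mp hball
      simp only [dist_zero_right] at this
      linarith [not_le.mp this])
    exact (this.trans rfl).symm
  have := h1.union h2
  apply this.mono_set
  intro p hp
  by_cases h : p ∈ Metric.closedBall (0 : ℝ × ℝ) R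
  · exact Or.inl h
  · exact Or.inr ⟨hp, h⟩

lemma integrable_line {f : ℝ → ℝ} (hf : Continuous f) (R : ℝ)
    (h0 : ∀ x : ℝ, R ≤ |x| → f x = 0) : Integrable f := by
  apply hf.integrable_of_hasCompactSupport
  apply HasCompactSupport.intro (isCompact_Icc (a := -R) (b := R))
  intro x hx
  apply h0
  simp only [Set.mem_Icc, not_and_or, not_le] at hx
  rcases hx with h | h
  · exact le_abs.mpr (Or.inr (by linarith))
  · exact le_abs.mpr (Or.inl (by linarith))

lemma integral_line_eq {f : ℝ → ℝ} {R : ℝ} (hR : 0 < R)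
    (h0 : ∀ x : ℝ, R ≤ |x| → f x = 0) :
    ∫ x, f x = ∫ x in (-R)..R, f x := by
  apply (intervalIntegral.integral_eq_integral_of_support_subset _).symm
  intro x hx
  simp only [Function.mem_support] at hx
  constructor
  · by_contra h; push_neg at h
    exact hx (h0 x (le_abs.mpr (Or.inr (by linarith))))
  · by_contra h; push_neg at h
    exact hx (h0 x (le_abs.mpr (Or.inl (by linarith))))

lemma integrableOn_Ioi_of {f : ℝ → ℝ} (hf : Continuous f) {R : ℝ}
    (h0 : ∀ y : ℝ, R ≤ y → f y = 0) : IntegrableOn f (Ioi 0) := by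
  have h1 : IntegrableOn f (Ioc 0 R) :=
    hf.continuousOn.integrableOn_compact isCompact_Icc |>.mono_set Ioc_subset_Icc_self
  have h2 : IntegrableOn f (Ioi R) := by
    apply Integrable.congr (integrableOn_zero (μ := volume) (s := Ioi R))
    filter_upwards [ae_restrict_mem measurableSet_Ioi] with y hy
    exact (h0 y (le_of_lt hy)).symm
  have := h1.union h2
  apply this.mono_set
  intro y hy
  rcases le_or_gt y R with h | h
  · exact Or.inl ⟨hy, h⟩
  · exact Or.inr h

lemma integral_Ioi_eq {f : ℝ → ℝ} (hf : Continuous f) {R : ℝ} (hR : 0 ≤ R)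
    (h0 : ∀ y : ℝ, R ≤ y → f y = 0) :
    ∫ y in Ioi (0:ℝ), f y = ∫ y in (0:ℝ)..R, f y := by
  have hsplit : (Ioi (0:ℝ)) = Ioc 0 R ∪ Ioi R := (Ioc_union_Ioi_eq_Ioi hR).symm
  rw [hsplit, setIntegral_union (Ioc_disjoint_Ioi le_rfl) measurableSet_Ioi
    ((integrableOn_Ioi_of hf h0).mono_set (by rw [hsplit]; exact subset_union_left))
    ((integrableOn_Ioi_of hf h0).mono_set (by rw [hsplit]; exact subset_union_right))]
  have : ∫ y in Ioi R, f y = 0 := by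
    apply setIntegral_eq_zero_of_forall_eq_zero
    intro y hy; exact h0 y (le_of_lt hy)
  rw [this, add_zero, intervalIntegral.integral_of_le hR]


lemma upper_ae_eq :
    ({p : ℝ × ℝ | 0 ≤ p.2} : Set (ℝ × ℝ)) =ᵐ[volume] (univ : Set ℝ) ×ˢ Ioi (0:ℝ) := by
  rw [MeasureTheory.ae_eq_set]
  constructor
  · apply measure_mono_null _ null_horiz
    rintro ⟨a, b⟩ ⟨h1, h2⟩
    simp only [Set.mem_prod, mem_univ, mem_Ioi, true_and] at h2
    simp only [mem_setOf_eq] at h1 ⊢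
    exact le_antisymm (not_lt.mp h2) h1
  · apply measure_mono_null _ null_horiz
    rintro ⟨a, b⟩ ⟨h1, h2⟩
    simp only [Set.mem_prod, mem_univ, mem_Ioi, true_and] at h1
    simp only [mem_setOf_eq] at h2
    exact absurd (le_of_lt h1) h2

lemma restrict_upper_prod :
    (volume : Measure (ℝ × ℝ)).restrict {p : ℝ × ℝ | 0 ≤ p.2}
      = (volume : Measure ℝ).prod ((volume : Measure ℝ).restrict (Ioi 0)) := by
  rw [Measure.restrict_congr_set upper_ae_eq, Measure.volume_eq_prod,
    ← Measure.prod_restrict, Measure.restrict_univ]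

lemma fub_x_outer {f : ℝ × ℝ → ℝ} (hf : IntegrableOn f {p : ℝ × ℝ | 0 ≤ p.2}) :
    ∫ p in {p : ℝ × ℝ | 0 ≤ p.2}, f p = ∫ x : ℝ, ∫ y in Ioi (0:ℝ), f (x, y) := by
  have hf' : Integrable f ((volume : Measure ℝ).prod ((volume : Measure ℝ).restrict (Ioi 0))) := by
    rw [← restrict_upper_prod]; exact hf
  calc ∫ p in {p : ℝ × ℝ | 0 ≤ p.2}, f p
      = ∫ p, f p ∂((volume : Measure ℝ).prod ((volume : Measure ℝ).restrict (Ioi 0))) := by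
        rw [restrict_upper_prod]
    _ = ∫ x : ℝ, ∫ y in Ioi (0:ℝ), f (x, y) := integral_prod f hf'

lemma fub_y_outer {f : ℝ × ℝ → ℝ} (hf : IntegrableOn f {p : ℝ × ℝ | 0 ≤ p.2}) :
    ∫ p in {p : ℝ × ℝ | 0 ≤ p.2}, f p = ∫ y in Ioi (0:ℝ), ∫ x : ℝ, f (x, y) := by
  have hf' : Integrable f ((volume : Measure ℝ).prod ((volume : Measure ℝ).restrict (Ioi 0))) := by
    rw [← restrict_upper_prod]; exact hf
  calc ∫ p in {p : ℝ × ℝ | 0 ≤ p.2}, f p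
      = ∫ p, f p ∂((volume : Measure ℝ).prod ((volume : Measure ℝ).restrict (Ioi 0))) := by
        rw [restrict_upper_prod]
    _ = ∫ y in Ioi (0:ℝ), ∫ x : ℝ, f (x, y) := integral_prod_symm f hf'

lemma integrable_inner_y {f : ℝ × ℝ → ℝ} (hf : IntegrableOn f {p : ℝ × ℝ | 0 ≤ p.2}) :
    Integrable (fun x : ℝ => ∫ y in Ioi (0:ℝ), f (x, y)) := by
  have hf' : Integrable f ((volume : Measure ℝ).prod ((volume : Measure ℝ).restrict (Ioi 0))) := by
    rw [← restrict_upper_prod]; exact hf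
  exact hf'.integral_prod_left


section Slices

variable {E : Type*} [NormedAddCommGroup E] [NormedSpace ℝ E]

lemma hasDerivAt_slice1 {Φ : ℝ × ℝ × ℝ → E} {t x y : ℝ}
    (hΦ : DifferentiableAt ℝ Φ (t, x, y)) :
    HasDerivAt (fun s => Φ (s, x, y)) (fderiv ℝ Φ (t, x, y) (1, 0, 0)) t := by
  have hι : HasDerivAt (fun s : ℝ => ((s, x, y) : ℝ × ℝ × ℝ)) ((1:ℝ), (0:ℝ), (0:ℝ)) t :=
    HasDerivAt.prodMk (hasDerivAt_id t) (hasDerivAt_const t ((x, y) : ℝ × ℝ))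
  exact hΦ.hasFDerivAt.comp_hasDerivAt t hι

lemma hasDerivAt_slice2 {Φ : ℝ × ℝ × ℝ → E} {t x y : ℝ}
    (hΦ : DifferentiableAt ℝ Φ (t, x, y)) :
    HasDerivAt (fun x' => Φ (t, x', y)) (fderiv ℝ Φ (t, x, y) (0, 1, 0)) x := by
  have hι : HasDerivAt (fun x' : ℝ => ((t, x', y) : ℝ × ℝ × ℝ)) ((0:ℝ), (1:ℝ), (0:ℝ)) x :=
    HasDerivAt.prodMk (hasDerivAt_const x t) (HasDerivAt.prodMk (hasDerivAt_id x) (hasDerivAt_const x y))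
  exact hΦ.hasFDerivAt.comp_hasDerivAt x hι

lemma hasDerivAt_slice3 {Φ : ℝ × ℝ × ℝ → E} {t x y : ℝ}
    (hΦ : DifferentiableAt ℝ Φ (t, x, y)) :
    HasDerivAt (fun y' => Φ (t, x, y')) (fderiv ℝ Φ (t, x, y) (0, 0, 1)) y := by
  have hι : HasDerivAt (fun y' : ℝ => ((t, x, y') : ℝ × ℝ × ℝ)) ((0:ℝ), (0:ℝ), (1:ℝ)) y :=
    HasDerivAt.prodMk (hasDerivAt_const y t) (HasDerivAt.prodMk (hasDerivAt_const y x) (hasDerivAt_id y))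
  exact hΦ.hasFDerivAt.comp_hasDerivAt y hι

lemma hasDerivAt_slice2d_fst {Φ : ℝ × ℝ → E} {x y : ℝ}
    (hΦ : DifferentiableAt ℝ Φ (x, y)) :
    HasDerivAt (fun x' => Φ (x', y)) (fderiv ℝ Φ (x, y) (1, 0)) x := by
  have hι : HasDerivAt (fun x' : ℝ => ((x', y) : ℝ × ℝ)) ((1:ℝ), (0:ℝ)) x :=
    HasDerivAt.prodMk (hasDerivAt_id x) (hasDerivAt_const x y)
  exact hΦ.hasFDerivAt.comp_hasDerivAt x hι

lemma hasDerivAt_slice2d_snd {Φ : ℝ × ℝ → E} {x y : ℝ}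
    (hΦ : DifferentiableAt ℝ Φ (x, y)) :
    HasDerivAt (fun y' => Φ (x, y')) (fderiv ℝ Φ (x, y) (0, 1)) y := by
  have hι : HasDerivAt (fun y' : ℝ => ((x, y') : ℝ × ℝ)) ((0:ℝ), (1:ℝ)) y :=
    HasDerivAt.prodMk (hasDerivAt_const y x) (hasDerivAt_id y)
  exact hΦ.hasFDerivAt.comp_hasDerivAt y hι

lemma fderiv_clm_apply_const {X : Type*} [NormedAddCommGroup X] [NormedSpace ℝ X]
    {G : X → (X →L[ℝ] ℝ)} {q : X} (hG : DifferentiableAt ℝ G q) (b a : X) :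
    fderiv ℝ (fun q' => G q' b) q a = fderiv ℝ G q a b := by
  rw [fderiv_clm_apply hG (differentiableAt_const b)]
  simp

end Slices

end EDL

set_option maxHeartbeats 2000000

/-- **Energy dissipation law.** Let `u` solve the bulk–interface system
`∂ₜu = Δu` (`y > 0`), `∂ₜu = ∂_y u - W'(u)` (`y = 0`) on `[0,T]`, with `u(t,·,·) - ψ`
supported in a fixed compact set `K`. Then the relative Ginzburg–Landau energy
`E(t) = ½∫_{ℝ²₊}(|∇u|² - |∇ψ|²) + ∫_ℝ (W(u(t,x,0)) - W(ψ(x,0))) dx` is differentiable on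
`(0,T)` with `E'(t) = -∫_{ℝ²₊}(∂ₜu)² - ∫_ℝ(∂ₜu|_{y=0})² ≤ 0`, and equivalently
`E'(t) = -∫_{ℝ²₊}(Δu)² - ∫_ℝ(∂_y u - W'(u))²` on the boundary. -/
theorem energy_dissipation_law
    (W : ℝ → ℝ) (hW : ContDiff ℝ 3 W)
    (hWb : ∃ C, ∀ x, |W x| ≤ C)
    (hW'b : ∃ C, ∀ x, |deriv W x| ≤ C)
    (hW''b : ∃ C, ∀ x, |deriv (deriv W) x| ≤ C)
    (ψ : ℝ → ℝ → ℝ) (hψ : ContDiff ℝ 2 fun p : ℝ × ℝ => ψ p.1 p.2)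
    (K : Set (ℝ × ℝ)) (hK : IsCompact K)
    (T : ℝ) (hT : 0 < T)
    (u : ℝ → ℝ → ℝ → ℝ)
    (hu : ContDiff ℝ 2 fun p : ℝ × ℝ × ℝ => u p.1 p.2.1 p.2.2)
    (hbulk : ∀ t ∈ Icc (0:ℝ) T, ∀ x y : ℝ, 0 < y →
      deriv (fun s => u s x y) t = pdxx (u t) x y + pdyy (u t) x y)
    (hbdy : ∀ t ∈ Icc (0:ℝ) T, ∀ x : ℝ,
      deriv (fun s => u s x 0) t = pdy (u t) x 0 - deriv W (u t x 0))
    (hsupp : ∀ t ∈ Icc (0:ℝ) T, ∀ x y : ℝ, 0 ≤ y → (x, y) ∉ K → u t x y = ψ x y) :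
    ∀ t ∈ Ioo (0:ℝ) T,
      HasDerivAt
        (fun s => (1/2) * (∫ p in upperHalfPlane2,
            ((pdx (u s) p.1 p.2) ^ 2 + (pdy (u s) p.1 p.2) ^ 2
              - (pdx ψ p.1 p.2) ^ 2 - (pdy ψ p.1 p.2) ^ 2))
          + ∫ x : ℝ, (W (u s x 0) - W (ψ x 0)))
        (-(∫ p in upperHalfPlane2, (deriv (fun s' => u s' p.1 p.2) t) ^ 2)
          - ∫ x : ℝ, (deriv (fun s' => u s' x 0) t) ^ 2) t
      ∧ (-(∫ p in upperHalfPlane2, (deriv (fun s' => u s' p.1 p.2) t) ^ 2)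
          - ∫ x : ℝ, (deriv (fun s' => u s' x 0) t) ^ 2) ≤ 0
      ∧ (-(∫ p in upperHalfPlane2, (deriv (fun s' => u s' p.1 p.2) t) ^ 2)
          - ∫ x : ℝ, (deriv (fun s' => u s' x 0) t) ^ 2
        = -(∫ p in upperHalfPlane2, (pdxx (u t) p.1 p.2 + pdyy (u t) p.1 p.2) ^ 2)
          - ∫ x : ℝ, (pdy (u t) x 0 - deriv W (u t x 0)) ^ 2) := by
  classical
  obtain ⟨CW, hCW⟩ := hW'b
  -- basic smoothness infrastructure
  set F : ℝ × ℝ × ℝ → ℝ := fun p => u p.1 p.2.1 p.2.2 with hFdef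
  set G : ℝ × ℝ × ℝ → ((ℝ × ℝ × ℝ) →L[ℝ] ℝ) := fderiv ℝ F with hGdef
  set H : ℝ × ℝ × ℝ → ((ℝ × ℝ × ℝ) →L[ℝ] ((ℝ × ℝ × ℝ) →L[ℝ] ℝ)) := fderiv ℝ G with hHdef
  have hF2 : ContDiff ℝ 2 F := hu
  have hFd : Differentiable ℝ F := hF2.differentiable (by norm_num)
  have hG1 : ContDiff ℝ 1 G := hF2.fderiv_right (by norm_num)
  have hGc : Continuous G := hG1.continuous
  have hGd : Differentiable ℝ G := hG1.differentiable one_ne_zero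
  have hGbd : ∀ b : ℝ × ℝ × ℝ, Differentiable ℝ (fun q => G q b) :=
    fun b => (hG1.clm_apply contDiff_const).differentiable one_ne_zero
  have hHc : Continuous H := (hG1.fderiv_right (m := 0) (by norm_num)).continuous
  have hHcab : ∀ a b : ℝ × ℝ × ℝ, Continuous fun q => H q a b :=
    fun a b => (hHc.clm_apply continuous_const).clm_apply continuous_const
  set Ψ : ℝ × ℝ → ℝ := fun p => ψ p.1 p.2 with hΨdef
  have hΨ2 : ContDiff ℝ 2 Ψ := hψ
  have hΨd : Differentiable ℝ Ψ := hΨ2.differentiable (by norm_num)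
  set Gψ : ℝ × ℝ → ((ℝ × ℝ) →L[ℝ] ℝ) := fderiv ℝ Ψ with hGψdef
  have hGψc : Continuous Gψ := (hΨ2.fderiv_right (m := 0) (by norm_num)).continuous
  -- bridge lemmas
  have bt : ∀ (s x y : ℝ), HasDerivAt (fun s' => u s' x y) (G (s,x,y) (1,0,0)) s :=
    fun s x y => EDL.hasDerivAt_slice1 (hFd _)
  have bx : ∀ (s x y : ℝ), pdx (u s) x y = G (s,x,y) (0,1,0) :=
    fun s x y => (EDL.hasDerivAt_slice2 (hFd ((s,x,y) : ℝ × ℝ × ℝ))).deriv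
  have by' : ∀ (s x y : ℝ), pdy (u s) x y = G (s,x,y) (0,0,1) :=
    fun s x y => (EDL.hasDerivAt_slice3 (hFd ((s,x,y) : ℝ × ℝ × ℝ))).deriv
  have bψx : ∀ (x y : ℝ), pdx ψ x y = Gψ (x,y) (1,0) :=
    fun x y => (EDL.hasDerivAt_slice2d_fst (hΨd ((x,y) : ℝ × ℝ))).deriv
  have bψy : ∀ (x y : ℝ), pdy ψ x y = Gψ (x,y) (0,1) :=
    fun x y => (EDL.hasDerivAt_slice2d_snd (hΨd ((x,y) : ℝ × ℝ))).deriv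
  have bGt : ∀ (b : ℝ × ℝ × ℝ) (s x y : ℝ),
      HasDerivAt (fun s' => G (s',x,y) b) (H (s,x,y) (1,0,0) b) s := by
    intro b s x y
    have h1 := EDL.hasDerivAt_slice1 (Φ := fun q => G q b) (hGbd b ((s,x,y) : ℝ × ℝ × ℝ))
    rwa [EDL.fderiv_clm_apply_const (hGd _)] at h1
  have bGx : ∀ (b : ℝ × ℝ × ℝ) (s x y : ℝ),
      HasDerivAt (fun x' => G (s,x',y) b) (H (s,x,y) (0,1,0) b) x := by
    intro b s x y
    have h1 := EDL.hasDerivAt_slice2 (Φ := fun q => G q b) (hGbd b ((s,x,y) : ℝ × ℝ × ℝ))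
    rwa [EDL.fderiv_clm_apply_const (hGd _)] at h1
  have bGy : ∀ (b : ℝ × ℝ × ℝ) (s x y : ℝ),
      HasDerivAt (fun y' => G (s,x,y') b) (H (s,x,y) (0,0,1) b) y := by
    intro b s x y
    have h1 := EDL.hasDerivAt_slice3 (Φ := fun q => G q b) (hGbd b ((s,x,y) : ℝ × ℝ × ℝ))
    rwa [EDL.fderiv_clm_apply_const (hGd _)] at h1
  have bxx : ∀ (s x y : ℝ), pdxx (u s) x y = H (s,x,y) (0,1,0) (0,1,0) := by
    intro s x y
    have hfun : (fun x' => pdx (u s) x' y) = fun x' => G (s,x',y) (0,1,0) :=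
      funext fun x' => bx s x' y
    rw [pdxx, hfun]
    exact (bGx (0,1,0) s x y).deriv
  have byy : ∀ (s x y : ℝ), pdyy (u s) x y = H (s,x,y) (0,0,1) (0,0,1) := by
    intro s x y
    have hfun : (fun y' => pdy (u s) x y') = fun y' => G (s,x,y') (0,0,1) :=
      funext fun y' => by' s x y'
    rw [pdyy, hfun]
    exact (bGy (0,0,1) s x y).deriv
  have hsymm : ∀ (q : ℝ × ℝ × ℝ) (a b : ℝ × ℝ × ℝ), H q a b = H q b a :=
    fun q a b => (hF2.contDiffAt.isSymmSndFDerivAt (by simp [minSmoothness_of_isRCLikeNormedField])) a b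
  -- support radius
  obtain ⟨R, hRpos, hKR⟩ := hK.isBounded.subset_ball_lt 0 0
  have hnotK : ∀ p : ℝ × ℝ, R ≤ ‖p‖ → p ∉ K := by
    intro p hRp hpK
    have := hKR hpK
    rw [Metric.mem_ball, dist_zero_right] at this
    linarith
  have hnotK1 : ∀ x y : ℝ, R ≤ |x| → (x, y) ∉ K := by
    intro x y hx
    exact hnotK _ (le_trans (by simpa using hx) (norm_fst_le ((x,y) : ℝ × ℝ)))
  have hnotK2 : ∀ x y : ℝ, R ≤ |y| → (x, y) ∉ K := by
    intro x y hy
    exact hnotK _ (le_trans (by simpa using hy) (norm_snd_le ((x,y) : ℝ × ℝ)))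
  -- support lemmas
  have hz : ∀ s ∈ Ioo (0:ℝ) T, ∀ p : ℝ × ℝ, p ∉ K → 0 ≤ p.2 →
      G (s, p.1, p.2) (1,0,0) = 0 := by
    intro s hs p hp hp2
    have heq : (fun s' => u s' p.1 p.2) =ᶠ[nhds s] (fun _ => ψ p.1 p.2) := by
      filter_upwards [Ioo_mem_nhds hs.1 hs.2] with s' hs'
      exact hsupp s' (Ioo_subset_Icc_self hs') p.1 p.2 hp2 (by simpa using hp)
    rw [← (bt s p.1 p.2).deriv, heq.deriv_eq, deriv_const]
  have hUopen : IsOpen (Kᶜ ∩ {q : ℝ × ℝ | 0 < q.2}) :=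
    (hK.isClosed.isOpen_compl).inter (isOpen_lt continuous_const continuous_snd)
  have huψ : ∀ s ∈ Ioo (0:ℝ) T, ∀ q ∈ (Kᶜ ∩ {q : ℝ × ℝ | 0 < q.2}), u s q.1 q.2 = ψ q.1 q.2 := by
    intro s hs q hq
    exact hsupp s (Ioo_subset_Icc_self hs) q.1 q.2 (le_of_lt hq.2) (by simpa using hq.1)
  have hspatx : ∀ s ∈ Ioo (0:ℝ) T, ∀ p : ℝ × ℝ, p ∉ K → 0 < p.2 →
      G (s, p.1, p.2) (0,1,0) = Gψ p (1,0) := by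
    intro s hs p hp hp2
    have hpU : p ∈ Kᶜ ∩ {q : ℝ × ℝ | 0 < q.2} := ⟨hp, hp2⟩
    have hev : ∀ᶠ x' in nhds p.1, ((x', p.2) : ℝ × ℝ) ∈ Kᶜ ∩ {q : ℝ × ℝ | 0 < q.2} := by
      have hc : ContinuousAt (fun x' : ℝ => ((x', p.2) : ℝ × ℝ)) p.1 :=
        (continuous_id.prodMk continuous_const).continuousAt
      exact hc.preimage_mem_nhds (hUopen.mem_nhds (by simpa using hpU))
    have heq : (fun x' => u s x' p.2) =ᶠ[nhds p.1] (fun x' => ψ x' p.2) := by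
      filter_upwards [hev] with x' hx'
      exact huψ s hs _ hx'
    have h1 : pdx (u s) p.1 p.2 = pdx ψ p.1 p.2 := heq.deriv_eq
    rw [← bx s p.1 p.2, h1, bψx]
  have hspaty : ∀ s ∈ Ioo (0:ℝ) T, ∀ p : ℝ × ℝ, p ∉ K → 0 < p.2 →
      G (s, p.1, p.2) (0,0,1) = Gψ p (0,1) := by
    intro s hs p hp hp2
    have hpU : p ∈ Kᶜ ∩ {q : ℝ × ℝ | 0 < q.2} := ⟨hp, hp2⟩
    have hev : ∀ᶠ y' in nhds p.2, ((p.1, y') : ℝ × ℝ) ∈ Kᶜ ∩ {q : ℝ × ℝ | 0 < q.2} := by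
      have hc : ContinuousAt (fun y' : ℝ => ((p.1, y') : ℝ × ℝ)) p.2 :=
        (continuous_const.prodMk continuous_id).continuousAt
      exact hc.preimage_mem_nhds (hUopen.mem_nhds (by simpa using hpU))
    have heq : (fun y' => u s p.1 y') =ᶠ[nhds p.2] (fun y' => ψ p.1 y') := by
      filter_upwards [hev] with y' hy'
      exact huψ s hs _ hy'
    have h1 : pdy (u s) p.1 p.2 = pdy ψ p.1 p.2 := heq.deriv_eq
    rw [← by' s p.1 p.2, h1, bψy]
  have hmixx : ∀ s ∈ Ioo (0:ℝ) T, ∀ p : ℝ × ℝ, p ∉ K → 0 < p.2 →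
      H (s, p.1, p.2) (1,0,0) (0,1,0) = 0 := by
    intro s hs p hp hp2
    have heq : (fun s' => G (s', p.1, p.2) (0,1,0)) =ᶠ[nhds s] (fun _ => Gψ p (1,0)) := by
      filter_upwards [Ioo_mem_nhds hs.1 hs.2] with s' hs'
      exact hspatx s' hs' p hp hp2
    rw [← (bGt (0,1,0) s p.1 p.2).deriv, heq.deriv_eq, deriv_const]
  have hmixy : ∀ s ∈ Ioo (0:ℝ) T, ∀ p : ℝ × ℝ, p ∉ K → 0 < p.2 →
      H (s, p.1, p.2) (1,0,0) (0,0,1) = 0 := by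
    intro s hs p hp hp2
    have heq : (fun s' => G (s', p.1, p.2) (0,0,1)) =ᶠ[nhds s] (fun _ => Gψ p (0,1)) := by
      filter_upwards [Ioo_mem_nhds hs.1 hs.2] with s' hs'
      exact hspaty s' hs' p hp hp2
    rw [← (bGt (0,0,1) s p.1 p.2).deriv, heq.deriv_eq, deriv_const]
  have bψxP : ∀ p : ℝ × ℝ, pdx ψ p.1 p.2 = Gψ p (1,0) := fun p => bψx p.1 p.2
  have bψyP : ∀ p : ℝ × ℝ, pdy ψ p.1 p.2 = Gψ p (0,1) := fun p => bψy p.1 p.2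
  -- fix t₀
  intro t₀ ht₀
  have ht₀Icc : t₀ ∈ Icc (0:ℝ) T := Ioo_subset_Icc_self ht₀
  set ε : ℝ := min t₀ (T - t₀) with hεdef
  have hε : 0 < ε := lt_min ht₀.1 (by linarith [ht₀.2])
  have hcball : Metric.closedBall t₀ (ε/2) ⊆ Ioo (0:ℝ) T := by
    intro s hs
    rw [Metric.mem_closedBall, Real.dist_eq] at hs
    have h1 := abs_le.mp hs
    have h2 : ε ≤ t₀ := min_le_left _ _
    have h3 : ε ≤ T - t₀ := min_le_right _ _
    constructor <;> [linarith; linarith]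
  have hball : Metric.ball t₀ (ε/2) ⊆ Ioo (0:ℝ) T :=
    fun s hs => hcball (Metric.ball_subset_closedBall hs)
  -- continuity in the space variable
  have cz : Continuous (fun z : ℝ × (ℝ × ℝ) => ((z.1, z.2.1, z.2.2) : ℝ × ℝ × ℝ)) := by
    fun_prop
  have cGp : ∀ (s : ℝ) (b : ℝ × ℝ × ℝ), Continuous fun p : ℝ × ℝ => G (s, p.1, p.2) b := by
    intro s b
    exact (hGc.comp (by fun_prop)).clm_apply continuous_const
  have cHp : ∀ (s : ℝ) (a b : ℝ × ℝ × ℝ), Continuous fun p : ℝ × ℝ => H (s, p.1, p.2) a b := by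
    intro s a b
    exact ((hHc.comp (by fun_prop)).clm_apply continuous_const).clm_apply continuous_const
  have cGψp : ∀ b : ℝ × ℝ, Continuous fun p : ℝ × ℝ => Gψ p b :=
    fun b => hGψc.clm_apply continuous_const
  have hSmeas : MeasurableSet upperHalfPlane2 := measurableSet_le measurable_const measurable_snd
  have haeS : ∀ᵐ p : ℝ × ℝ ∂(volume.restrict upperHalfPlane2), 0 < p.2 := by
    have h0 : ∀ᵐ p : ℝ × ℝ ∂(volume : Measure (ℝ × ℝ)), p.2 ≠ 0 := by
      rw [ae_iff]; simpa using EDL.null_horiz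
    filter_upwards [ae_restrict_of_ae h0, ae_restrict_mem hSmeas] with p h1 h2
    exact lt_of_le_of_ne h2 (Ne.symm h1)
  -- the bulk integrand and its time derivative
  have hF₁eq : ∀ (s : ℝ) (p : ℝ × ℝ),
      pdx (u s) p.1 p.2 ^ 2 + pdy (u s) p.1 p.2 ^ 2 - pdx ψ p.1 p.2 ^ 2 - pdy ψ p.1 p.2 ^ 2
        = (G (s,p.1,p.2) (0,1,0)) ^ 2 + (G (s,p.1,p.2) (0,0,1)) ^ 2
          - (Gψ p (1,0)) ^ 2 - (Gψ p (0,1)) ^ 2 := by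
    intro s p
    rw [bx, by', bψxP, bψyP]
  have hF₁cont : ∀ s : ℝ, Continuous (fun p : ℝ × ℝ =>
      pdx (u s) p.1 p.2 ^ 2 + pdy (u s) p.1 p.2 ^ 2 - pdx ψ p.1 p.2 ^ 2 - pdy ψ p.1 p.2 ^ 2) := by
    intro s
    have : (fun p : ℝ × ℝ =>
        pdx (u s) p.1 p.2 ^ 2 + pdy (u s) p.1 p.2 ^ 2 - pdx ψ p.1 p.2 ^ 2 - pdy ψ p.1 p.2 ^ 2)
        = fun p : ℝ × ℝ => (G (s,p.1,p.2) (0,1,0)) ^ 2 + (G (s,p.1,p.2) (0,0,1)) ^ 2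
          - (Gψ p (1,0)) ^ 2 - (Gψ p (0,1)) ^ 2 := funext fun p => hF₁eq s p
    rw [this]
    exact ((((cGp s (0,1,0)).pow 2).add ((cGp s (0,0,1)).pow 2)).sub
      ((cGψp (1,0)).pow 2)).sub ((cGψp (0,1)).pow 2)
  have hF₁vanish : ∀ s ∈ Ioo (0:ℝ) T, ∀ p : ℝ × ℝ, 0 < p.2 → p ∉ K →
      pdx (u s) p.1 p.2 ^ 2 + pdy (u s) p.1 p.2 ^ 2 - pdx ψ p.1 p.2 ^ 2 - pdy ψ p.1 p.2 ^ 2 = 0 := by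
    intro s hs p h2 h1
    rw [hF₁eq, hspatx s hs p h1 h2, hspaty s hs p h1 h2]
    ring
  have hF₁deriv : ∀ (s : ℝ) (p : ℝ × ℝ), HasDerivAt
      (fun s' => pdx (u s') p.1 p.2 ^ 2 + pdy (u s') p.1 p.2 ^ 2
        - pdx ψ p.1 p.2 ^ 2 - pdy ψ p.1 p.2 ^ 2)
      (2 * (G (s,p.1,p.2) (0,1,0) * H (s,p.1,p.2) (1,0,0) (0,1,0)
        + G (s,p.1,p.2) (0,0,1) * H (s,p.1,p.2) (1,0,0) (0,0,1))) s := by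
    intro s p
    have h1 : (fun s' => pdx (u s') p.1 p.2 ^ 2 + pdy (u s') p.1 p.2 ^ 2
        - pdx ψ p.1 p.2 ^ 2 - pdy ψ p.1 p.2 ^ 2)
        = fun s' => (G (s',p.1,p.2) (0,1,0)) ^ 2 + (G (s',p.1,p.2) (0,0,1)) ^ 2
          - pdx ψ p.1 p.2 ^ 2 - pdy ψ p.1 p.2 ^ 2 := by
      funext s'
      rw [bx, by']
    rw [h1]
    have h2 := (((bGt (0,1,0) s p.1 p.2).pow 2).add ((bGt (0,0,1) s p.1 p.2).pow 2))
    have h3 := (h2.sub_const (pdx ψ p.1 p.2 ^ 2)).sub_const (pdy ψ p.1 p.2 ^ 2)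
    refine h3.congr_deriv ?_
    push_cast
    ring
  -- bound for the bulk derivative
  have cF'₁ : Continuous (fun z : ℝ × (ℝ × ℝ) =>
      2 * (G (z.1, z.2.1, z.2.2) (0,1,0) * H (z.1, z.2.1, z.2.2) (1,0,0) (0,1,0)
        + G (z.1, z.2.1, z.2.2) (0,0,1) * H (z.1, z.2.1, z.2.2) (1,0,0) (0,0,1))) := by
    exact continuous_const.mul
      ((((hGc.comp cz).clm_apply continuous_const).mul
        (((hHc.comp cz).clm_apply continuous_const).clm_apply continuous_const)).add
      ((((hGc.comp cz).clm_apply continuous_const).mul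
        (((hHc.comp cz).clm_apply continuous_const).clm_apply continuous_const))))
  obtain ⟨C₁, hC₁⟩ := ((isCompact_closedBall t₀ (ε/2)).prod hK).exists_bound_of_continuousOn
    cF'₁.continuousOn
  have hI₁ := hasDerivAt_integral_of_dominated_loc_of_deriv_le
    (μ := volume.restrict upperHalfPlane2) (x₀ := t₀) (s := Metric.ball t₀ (ε/2))
    (F := fun s p => pdx (u s) p.1 p.2 ^ 2 + pdy (u s) p.1 p.2 ^ 2
        - pdx ψ p.1 p.2 ^ 2 - pdy ψ p.1 p.2 ^ 2)
    (F' := fun s p => 2 * (G (s,p.1,p.2) (0,1,0) * H (s,p.1,p.2) (1,0,0) (0,1,0)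
        + G (s,p.1,p.2) (0,0,1) * H (s,p.1,p.2) (1,0,0) (0,0,1)))
    (bound := K.indicator fun _ => C₁)
    (Metric.ball_mem_nhds t₀ (half_pos hε))
    (Filter.Eventually.of_forall fun s => ((hF₁cont s).aestronglyMeasurable))
    (EDL.integrableOn_upper (hF₁cont t₀) R
      (fun p h1 h2 => hF₁vanish t₀ ht₀ p h1 (hnotK p h2)))
    (((cF'₁.comp (continuous_const.prodMk continuous_id)).aestronglyMeasurable))
    (by
      filter_upwards [haeS] with p hp
      intro s hs
      by_cases hpK : p ∈ K
      · rw [Set.indicator_of_mem hpK]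
        exact hC₁ (s, p) (Set.mem_prod.mpr ⟨Metric.ball_subset_closedBall hs, hpK⟩)
      · rw [Set.indicator_of_notMem hpK, hmixx s (hball hs) p hpK hp,
          hmixy s (hball hs) p hpK hp]
        simp)
    (((integrableOn_const hK.measure_lt_top.ne).integrable_indicator
        hK.measurableSet).restrict)
    (Filter.Eventually.of_forall fun p => fun s _ => hF₁deriv s p)
  -- boundary integrand
  have hW3 : ContDiff ℝ ((2:WithTop ℕ∞) + 1) W := by
    have : ((2:WithTop ℕ∞) + 1) = 3 := by norm_num
    rw [this]; exact hW
  have hWdC : Continuous (deriv W) := ((contDiff_succ_iff_deriv.mp hW3).2.2).continuous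
  have hWd : Differentiable ℝ W := hW.differentiable (by norm_num)
  have hCW0 : 0 ≤ CW := le_trans (abs_nonneg _) (hCW 0)
  have cusl : ∀ s : ℝ, Continuous (fun x : ℝ => u s x 0) := by
    intro s
    exact hF2.continuous.comp (by fun_prop : Continuous fun x : ℝ => ((s, x, 0) : ℝ × ℝ × ℝ))
  have cψsl : Continuous (fun x : ℝ => ψ x 0) :=
    hΨ2.continuous.comp (by fun_prop : Continuous fun x : ℝ => ((x, 0) : ℝ × ℝ))
  have hbz : ∀ s ∈ Ioo (0:ℝ) T, ∀ x : ℝ, R ≤ |x| → G (s,x,0) (1,0,0) = 0 :=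
    fun s hs x hx => hz s hs (x, 0) (hnotK1 x 0 hx) le_rfl
  have hF₂deriv : ∀ (s x : ℝ), HasDerivAt (fun s' => W (u s' x 0) - W (ψ x 0))
      (deriv W (u s x 0) * G (s,x,0) (1,0,0)) s := by
    intro s x
    exact (((hWd _).hasDerivAt.comp s (bt s x 0))).sub_const _
  have cGb : Continuous (fun z : ℝ × ℝ => G (z.1, z.2, 0) (1,0,0)) :=
    (hGc.comp (by fun_prop)).clm_apply continuous_const
  obtain ⟨C₂, hC₂⟩ := ((isCompact_closedBall t₀ (ε/2)).prod
    (isCompact_Icc (a := -R) (b := R))).exists_bound_of_continuousOn cGb.continuousOn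
  have hI₂ := hasDerivAt_integral_of_dominated_loc_of_deriv_le
    (μ := (volume : Measure ℝ)) (x₀ := t₀) (s := Metric.ball t₀ (ε/2))
    (F := fun s x => W (u s x 0) - W (ψ x 0))
    (F' := fun s x => deriv W (u s x 0) * G (s,x,0) (1,0,0))
    (bound := (Icc (-R) R).indicator fun _ => CW * C₂)
    (Metric.ball_mem_nhds t₀ (half_pos hε))
    (Filter.Eventually.of_forall fun s =>
      ((hW.continuous.comp (cusl s)).sub (hW.continuous.comp cψsl)).aestronglyMeasurable)
    (EDL.integrable_line ((hW.continuous.comp (cusl t₀)).sub (hW.continuous.comp cψsl)) R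
      (fun x hx => by
        show W (u t₀ x 0) - W (ψ x 0) = 0
        rw [hsupp t₀ ht₀Icc x 0 le_rfl (hnotK1 x 0 hx), sub_self]))
    ((hWdC.comp (cusl t₀)).mul
      (cGb.comp (continuous_const.prodMk continuous_id))).aestronglyMeasurable
    (by
      apply Filter.Eventually.of_forall
      intro x s hs
      show ‖deriv W (u s x 0) * G (s,x,0) (1,0,0)‖ ≤ (Icc (-R) R).indicator (fun _ => CW * C₂) x
      by_cases hx : x ∈ Icc (-R) R
      · rw [Set.indicator_of_mem hx, Real.norm_eq_abs, abs_mul]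
        apply mul_le_mul (hCW _) ?_ (abs_nonneg _) hCW0
        exact hC₂ (s, x) (Set.mem_prod.mpr ⟨Metric.ball_subset_closedBall hs, hx⟩)
      · have hxR : R ≤ |x| := by
          rcases not_and_or.mp ((Set.mem_Icc).not.mp hx) with h | h
          · exact le_abs.mpr (Or.inr (by push_neg at h; linarith))
          · exact le_abs.mpr (Or.inl (by push_neg at h; linarith))
        rw [Set.indicator_of_notMem hx, hbz s (hball hs) x hxR, mul_zero]
        simp)
    (((integrableOn_const measure_Icc_lt_top.ne).integrable_indicator
      measurableSet_Icc))
    (Filter.Eventually.of_forall fun x => fun s _ => hF₂deriv s x)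
  -- Green's identity, x-part
  have cf1 : Continuous fun p : ℝ × ℝ => G (t₀,p.1,p.2) (0,1,0) * H (t₀,p.1,p.2) (0,1,0) (1,0,0) :=
    (cGp t₀ (0,1,0)).mul (cHp t₀ (0,1,0) (1,0,0))
  have cg1 : Continuous fun p : ℝ × ℝ => H (t₀,p.1,p.2) (0,1,0) (0,1,0) * G (t₀,p.1,p.2) (1,0,0) :=
    (cHp t₀ (0,1,0) (0,1,0)).mul (cGp t₀ (1,0,0))
  have if1 : IntegrableOn (fun p : ℝ × ℝ =>
      G (t₀,p.1,p.2) (0,1,0) * H (t₀,p.1,p.2) (0,1,0) (1,0,0)) {p : ℝ × ℝ | 0 ≤ p.2} :=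
    EDL.integrableOn_upper cf1 R (fun p h2 h1 => by
      rw [hsymm, hmixx t₀ ht₀ p (hnotK p h1) h2, mul_zero])
  have ig1 : IntegrableOn (fun p : ℝ × ℝ =>
      H (t₀,p.1,p.2) (0,1,0) (0,1,0) * G (t₀,p.1,p.2) (1,0,0)) {p : ℝ × ℝ | 0 ≤ p.2} :=
    EDL.integrableOn_upper cg1 R (fun p h2 h1 => by
      rw [hz t₀ ht₀ p (hnotK p h1) h2.le, mul_zero])
  have hzxy : ∀ s ∈ Ioo (0:ℝ) T, ∀ x y : ℝ, ((x,y) : ℝ × ℝ) ∉ K → 0 ≤ y →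
      G (s,x,y) (1,0,0) = 0 := fun s hs x y h1 h2 => hz s hs (x,y) h1 h2
  have hmixxy : ∀ s ∈ Ioo (0:ℝ) T, ∀ x y : ℝ, ((x,y) : ℝ × ℝ) ∉ K → 0 < y →
      H (s,x,y) (1,0,0) (0,1,0) = 0 := fun s hs x y h1 h2 => hmixx s hs (x,y) h1 h2
  have hmixyy : ∀ s ∈ Ioo (0:ℝ) T, ∀ x y : ℝ, ((x,y) : ℝ × ℝ) ∉ K → 0 < y →
      H (s,x,y) (1,0,0) (0,0,1) = 0 := fun s hs x y h1 h2 => hmixy s hs (x,y) h1 h2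
  have hRabs : R ≤ |R| := le_abs_self R
  have hRabs' : R ≤ |(-R)| := by rw [abs_neg]; exact le_abs_self R
  have green1inner : ∀ y : ℝ, 0 < y →
      (∫ x : ℝ, G (t₀,x,y) (0,1,0) * H (t₀,x,y) (0,1,0) (1,0,0))
        = -∫ x : ℝ, H (t₀,x,y) (0,1,0) (0,1,0) * G (t₀,x,y) (1,0,0) := by
    intro y hy
    have hvan1 : ∀ x : ℝ, R ≤ |x| →
        G (t₀,x,y) (0,1,0) * H (t₀,x,y) (0,1,0) (1,0,0) = 0 := by
      intro x hx
      rw [hsymm, hmixxy t₀ ht₀ x y (hnotK1 x y hx) hy, mul_zero]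
    have hvan2 : ∀ x : ℝ, R ≤ |x| →
        H (t₀,x,y) (0,1,0) (0,1,0) * G (t₀,x,y) (1,0,0) = 0 := by
      intro x hx
      rw [hzxy t₀ ht₀ x y (hnotK1 x y hx) hy.le, mul_zero]
    rw [EDL.integral_line_eq hRpos hvan1, EDL.integral_line_eq hRpos hvan2]
    have cGxy : ∀ b : ℝ × ℝ × ℝ, Continuous fun x : ℝ => G (t₀,x,y) b := by
      intro b
      exact (hGc.comp (by fun_prop)).clm_apply continuous_const
    have cHxy : ∀ a b : ℝ × ℝ × ℝ, Continuous fun x : ℝ => H (t₀,x,y) a b := by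
      intro a b
      exact ((hHc.comp (by fun_prop)).clm_apply continuous_const).clm_apply continuous_const
    have parts := intervalIntegral.integral_mul_deriv_eq_deriv_mul
      (u := fun x => G (t₀,x,y) (0,1,0)) (u' := fun x => H (t₀,x,y) (0,1,0) (0,1,0))
      (v := fun x => G (t₀,x,y) (1,0,0)) (v' := fun x => H (t₀,x,y) (0,1,0) (1,0,0))
      (a := -R) (b := R)
      (fun x _ => bGx (0,1,0) t₀ x y) (fun x _ => bGx (1,0,0) t₀ x y)
      ((cHxy (0,1,0) (0,1,0)).intervalIntegrable _ _)
      ((cHxy (0,1,0) (1,0,0)).intervalIntegrable _ _)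
    rw [parts]
    beta_reduce
    rw [hzxy t₀ ht₀ R y (hnotK1 R y hRabs) hy.le,
      hzxy t₀ ht₀ (-R) y (hnotK1 (-R) y hRabs') hy.le]
    ring
  have green1 : (∫ p in {p : ℝ × ℝ | 0 ≤ p.2},
        G (t₀,p.1,p.2) (0,1,0) * H (t₀,p.1,p.2) (0,1,0) (1,0,0))
      = -∫ p in {p : ℝ × ℝ | 0 ≤ p.2},
        H (t₀,p.1,p.2) (0,1,0) (0,1,0) * G (t₀,p.1,p.2) (1,0,0) := by
    rw [EDL.fub_y_outer if1, EDL.fub_y_outer ig1, ← integral_neg]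
    apply setIntegral_congr_fun measurableSet_Ioi
    intro y hy
    exact green1inner y hy
  -- Green's identity, y-part
  have cf2 : Continuous fun p : ℝ × ℝ => G (t₀,p.1,p.2) (0,0,1) * H (t₀,p.1,p.2) (0,0,1) (1,0,0) :=
    (cGp t₀ (0,0,1)).mul (cHp t₀ (0,0,1) (1,0,0))
  have cg2 : Continuous fun p : ℝ × ℝ => H (t₀,p.1,p.2) (0,0,1) (0,0,1) * G (t₀,p.1,p.2) (1,0,0) :=
    (cHp t₀ (0,0,1) (0,0,1)).mul (cGp t₀ (1,0,0))
  have if2 : IntegrableOn (fun p : ℝ × ℝ =>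
      G (t₀,p.1,p.2) (0,0,1) * H (t₀,p.1,p.2) (0,0,1) (1,0,0)) {p : ℝ × ℝ | 0 ≤ p.2} :=
    EDL.integrableOn_upper cf2 R (fun p h2 h1 => by
      rw [hsymm, hmixy t₀ ht₀ p (hnotK p h1) h2, mul_zero])
  have ig2 : IntegrableOn (fun p : ℝ × ℝ =>
      H (t₀,p.1,p.2) (0,0,1) (0,0,1) * G (t₀,p.1,p.2) (1,0,0)) {p : ℝ × ℝ | 0 ≤ p.2} :=
    EDL.integrableOn_upper cg2 R (fun p h2 h1 => by
      rw [hz t₀ ht₀ p (hnotK p h1) h2.le, mul_zero])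
  have green2inner : ∀ x : ℝ,
      (∫ y in Ioi (0:ℝ), G (t₀,x,y) (0,0,1) * H (t₀,x,y) (0,0,1) (1,0,0))
        = -(G (t₀,x,0) (0,0,1) * G (t₀,x,0) (1,0,0))
          - ∫ y in Ioi (0:ℝ), H (t₀,x,y) (0,0,1) (0,0,1) * G (t₀,x,y) (1,0,0) := by
    intro x
    have cGy : ∀ b : ℝ × ℝ × ℝ, Continuous fun y : ℝ => G (t₀,x,y) b := by
      intro b
      exact (hGc.comp (by fun_prop)).clm_apply continuous_const
    have cHy : ∀ a b : ℝ × ℝ × ℝ, Continuous fun y : ℝ => H (t₀,x,y) a b := by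
      intro a b
      exact ((hHc.comp (by fun_prop)).clm_apply continuous_const).clm_apply continuous_const
    have hvany1 : ∀ y : ℝ, R ≤ y →
        G (t₀,x,y) (0,0,1) * H (t₀,x,y) (0,0,1) (1,0,0) = 0 := by
      intro y hy
      rw [hsymm, hmixyy t₀ ht₀ x y (hnotK2 x y (le_trans hy (le_abs_self y))) (lt_of_lt_of_le hRpos hy), mul_zero]
    have hvany2 : ∀ y : ℝ, R ≤ y →
        H (t₀,x,y) (0,0,1) (0,0,1) * G (t₀,x,y) (1,0,0) = 0 := by
      intro y hy
      rw [hzxy t₀ ht₀ x y (hnotK2 x y (le_trans hy (le_abs_self y))) (le_trans hRpos.le hy), mul_zero]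
    rw [EDL.integral_Ioi_eq (f := fun y => G (t₀,x,y) (0,0,1) * H (t₀,x,y) (0,0,1) (1,0,0)) ((cGy (0,0,1)).mul (cHy (0,0,1) (1,0,0))) hRpos.le hvany1,
      EDL.integral_Ioi_eq (f := fun y => H (t₀,x,y) (0,0,1) (0,0,1) * G (t₀,x,y) (1,0,0)) ((cHy (0,0,1) (0,0,1)).mul (cGy (1,0,0))) hRpos.le hvany2]
    have parts := intervalIntegral.integral_mul_deriv_eq_deriv_mul
      (u := fun y => G (t₀,x,y) (0,0,1)) (u' := fun y => H (t₀,x,y) (0,0,1) (0,0,1))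
      (v := fun y => G (t₀,x,y) (1,0,0)) (v' := fun y => H (t₀,x,y) (0,0,1) (1,0,0))
      (a := 0) (b := R)
      (fun y _ => bGy (0,0,1) t₀ x y) (fun y _ => bGy (1,0,0) t₀ x y)
      ((cHy (0,0,1) (0,0,1)).intervalIntegrable _ _)
      ((cHy (0,0,1) (1,0,0)).intervalIntegrable _ _)
    rw [parts]
    beta_reduce
    rw [hzxy t₀ ht₀ x R (hnotK2 x R hRabs) hRpos.le]
    ring
  have ibdry : Integrable (fun x : ℝ => G (t₀,x,0) (0,0,1) * G (t₀,x,0) (1,0,0)) := by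
    have cx0 : Continuous fun x : ℝ => ((t₀, x, 0) : ℝ × ℝ × ℝ) := by fun_prop
    apply EDL.integrable_line (((hGc.comp cx0).clm_apply continuous_const).mul
      ((hGc.comp cx0).clm_apply continuous_const)) R
    intro x hx
    show G (t₀,x,0) (0,0,1) * G (t₀,x,0) (1,0,0) = 0
    rw [hzxy t₀ ht₀ x 0 (hnotK1 x 0 hx) le_rfl, mul_zero]
  have green2 : (∫ p in {p : ℝ × ℝ | 0 ≤ p.2},
        G (t₀,p.1,p.2) (0,0,1) * H (t₀,p.1,p.2) (0,0,1) (1,0,0))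
      = -(∫ p in {p : ℝ × ℝ | 0 ≤ p.2},
          H (t₀,p.1,p.2) (0,0,1) (0,0,1) * G (t₀,p.1,p.2) (1,0,0))
        - ∫ x : ℝ, G (t₀,x,0) (0,0,1) * G (t₀,x,0) (1,0,0) := by
    have iinner : Integrable (fun x : ℝ =>
        ∫ y in Ioi (0:ℝ), H (t₀,x,y) (0,0,1) (0,0,1) * G (t₀,x,y) (1,0,0)) :=
      EDL.integrable_inner_y ig2
    calc (∫ p in {p : ℝ × ℝ | 0 ≤ p.2},
          G (t₀,p.1,p.2) (0,0,1) * H (t₀,p.1,p.2) (0,0,1) (1,0,0))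
        = ∫ x : ℝ, ∫ y in Ioi (0:ℝ), G (t₀,x,y) (0,0,1) * H (t₀,x,y) (0,0,1) (1,0,0) :=
          EDL.fub_x_outer if2
      _ = ∫ x : ℝ, (-(G (t₀,x,0) (0,0,1) * G (t₀,x,0) (1,0,0))
            - ∫ y in Ioi (0:ℝ), H (t₀,x,y) (0,0,1) (0,0,1) * G (t₀,x,y) (1,0,0)) :=
          integral_congr_ae (Filter.Eventually.of_forall fun x => green2inner x)
      _ = (∫ x : ℝ, -(G (t₀,x,0) (0,0,1) * G (t₀,x,0) (1,0,0)))
            - ∫ x : ℝ, ∫ y in Ioi (0:ℝ), H (t₀,x,y) (0,0,1) (0,0,1) * G (t₀,x,y) (1,0,0) :=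
          integral_sub ibdry.neg iinner
      _ = _ := by rw [integral_neg, ← EDL.fub_x_outer ig2]; ring
  -- assembly
  have hderiv_eq : ∀ p : ℝ × ℝ, deriv (fun s' => u s' p.1 p.2) t₀ = G (t₀,p.1,p.2) (1,0,0) :=
    fun p => (bt t₀ p.1 p.2).deriv
  have hderiv_eq0 : ∀ x : ℝ, deriv (fun s' => u s' x 0) t₀ = G (t₀,x,0) (1,0,0) :=
    fun x => (bt t₀ x 0).deriv
  have iw2 : IntegrableOn (fun p : ℝ × ℝ => (G (t₀,p.1,p.2) (1,0,0))^2) {p : ℝ × ℝ | 0 ≤ p.2} :=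
    EDL.integrableOn_upper ((cGp t₀ (1,0,0)).pow 2) R (fun p h2 h1 => by
      show (G (t₀,p.1,p.2) (1,0,0))^2 = 0
      rw [hz t₀ ht₀ p (hnotK p h1) h2.le]; ring)
  have e4 : (∫ p in {p : ℝ × ℝ | 0 ≤ p.2},
        H (t₀,p.1,p.2) (0,1,0) (0,1,0) * G (t₀,p.1,p.2) (1,0,0))
      + (∫ p in {p : ℝ × ℝ | 0 ≤ p.2},
        H (t₀,p.1,p.2) (0,0,1) (0,0,1) * G (t₀,p.1,p.2) (1,0,0))
      = ∫ p in {p : ℝ × ℝ | 0 ≤ p.2}, (G (t₀,p.1,p.2) (1,0,0))^2 := by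
    rw [← integral_add ig1 ig2]
    apply integral_congr_ae
    filter_upwards [haeS] with p hp
    have h := hbulk t₀ ht₀Icc p.1 p.2 hp
    rw [hderiv_eq p, bxx t₀ p.1 p.2, byy t₀ p.1 p.2] at h
    linear_combination (-(G (t₀,p.1,p.2) (1,0,0))) * h
  have e5 : (∫ x : ℝ, G (t₀,x,0) (0,0,1) * G (t₀,x,0) (1,0,0))
      - (∫ x : ℝ, deriv W (u t₀ x 0) * G (t₀,x,0) (1,0,0))
      = ∫ x : ℝ, (G (t₀,x,0) (1,0,0))^2 := by
    rw [← integral_sub ibdry hI₂.1]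
    apply integral_congr_ae
    apply Filter.Eventually.of_forall
    intro x
    have h := hbdy t₀ ht₀Icc x
    rw [hderiv_eq0 x, by' t₀ x 0] at h
    show G (t₀,x,0) (0,0,1) * G (t₀,x,0) (1,0,0)
      - deriv W (u t₀ x 0) * G (t₀,x,0) (1,0,0) = (G (t₀,x,0) (1,0,0))^2
    linear_combination (G (t₀,x,0) (1,0,0)) * h.symm
  have e6 : (∫ p in upperHalfPlane2, (deriv (fun s' => u s' p.1 p.2) t₀)^2)
      = ∫ p in {p : ℝ × ℝ | 0 ≤ p.2}, (G (t₀,p.1,p.2) (1,0,0))^2 :=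
    integral_congr_ae (Filter.Eventually.of_forall fun p => by beta_reduce; rw [hderiv_eq p])
  have e7 : (∫ x : ℝ, (deriv (fun s' => u s' x 0) t₀)^2)
      = ∫ x : ℝ, (G (t₀,x,0) (1,0,0))^2 :=
    integral_congr_ae (Filter.Eventually.of_forall fun x => by beta_reduce; rw [hderiv_eq0 x])
  have hA : (∫ p in upperHalfPlane2,
        2 * (G (t₀,p.1,p.2) (0,1,0) * H (t₀,p.1,p.2) (1,0,0) (0,1,0)
          + G (t₀,p.1,p.2) (0,0,1) * H (t₀,p.1,p.2) (1,0,0) (0,0,1)))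
      = 2 * ((∫ p in {p : ℝ × ℝ | 0 ≤ p.2},
          G (t₀,p.1,p.2) (0,1,0) * H (t₀,p.1,p.2) (0,1,0) (1,0,0))
        + ∫ p in {p : ℝ × ℝ | 0 ≤ p.2},
          G (t₀,p.1,p.2) (0,0,1) * H (t₀,p.1,p.2) (0,0,1) (1,0,0)) := by
    rw [← integral_add if1 if2, ← integral_const_mul]
    apply integral_congr_ae
    apply Filter.Eventually.of_forall
    intro p
    beta_reduce
    rw [hsymm (t₀,p.1,p.2) (1,0,0) (0,1,0), hsymm (t₀,p.1,p.2) (1,0,0) (0,0,1)]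
  have key : (1/2 : ℝ) * (∫ p in upperHalfPlane2,
        2 * (G (t₀,p.1,p.2) (0,1,0) * H (t₀,p.1,p.2) (1,0,0) (0,1,0)
          + G (t₀,p.1,p.2) (0,0,1) * H (t₀,p.1,p.2) (1,0,0) (0,0,1)))
      + (∫ x : ℝ, deriv W (u t₀ x 0) * G (t₀,x,0) (1,0,0))
      = (-(∫ p in upperHalfPlane2, (deriv (fun s' => u s' p.1 p.2) t₀)^2))
        - ∫ x : ℝ, (deriv (fun s' => u s' x 0) t₀)^2 := by
    rw [hA, e6, e7]
    linarith [green1, green2, e4, e5]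
  refine ⟨?_, ?_, ?_⟩
  · have hE := (HasDerivAt.const_mul ((1:ℝ)/2) hI₁.2).add hI₂.2
    refine hE.congr_deriv ?_
    beta_reduce
    exact key
  · have n1 : 0 ≤ ∫ p in upperHalfPlane2, (deriv (fun s' => u s' p.1 p.2) t₀)^2 :=
      setIntegral_nonneg hSmeas (fun p _ => sq_nonneg _)
    have n2 : 0 ≤ ∫ x : ℝ, (deriv (fun s' => u s' x 0) t₀)^2 :=
      integral_nonneg (fun x => sq_nonneg _)
    linarith
  · have hb : (∫ p in upperHalfPlane2, (deriv (fun s' => u s' p.1 p.2) t₀)^2)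
        = ∫ p in upperHalfPlane2, (pdxx (u t₀) p.1 p.2 + pdyy (u t₀) p.1 p.2)^2 := by
      apply integral_congr_ae
      filter_upwards [haeS] with p hp
      rw [hbulk t₀ ht₀Icc p.1 p.2 hp]
    have hb2 : (∫ x : ℝ, (deriv (fun s' => u s' x 0) t₀)^2)
        = ∫ x : ℝ, (pdy (u t₀) x 0 - deriv W (u t₀ x 0))^2 :=
      integral_congr_ae (Filter.Eventually.of_forall fun x => by beta_reduce; rw [hbdy t₀ ht₀Icc x])
    rw [hb, hb2]

end
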